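/- Fix a positive integer N and any stepsize α̃ ∈ ℝ. Then there exists a 1-smooth convex function f : ℝ → ℝ with minimizer x⋆ satisfying |x₀ - x⋆| ≤ 1 (for x₀ = 1) such that N steps of gradient descent x_{k+1} = x_k - α̃·f'(x_k) yield f(x_N) - inf f ≥ r(N), where r(N) is the common value of 1/(2(2Nα+1)) and (1-α)^(2N)/2 at the unique α = α(N) ≥ 1 solving their equality. -/
import Mathlib

noncomputable def clmp (δ x : ℝ) : ℝ := max (-δ) (min δ x)
noncomputable def Hub (δ x : ℝ) : ℝ := x * clmp δ x - (clmp δ x)^2/2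

lemma clmp_mem (δ x : ℝ) (hδ : 0 ≤ δ) : -δ ≤ clmp δ x ∧ clmp δ x ≤ δ := by
  unfold clmp
  exact ⟨le_max_left _ _, max_le (by linarith) (min_le_left _ _)⟩

lemma clmp_of_ge (δ x : ℝ) (hδ : 0 ≤ δ) (hx : δ ≤ x) : clmp δ x = δ := by
  unfold clmp; rw [min_eq_left hx, max_eq_right (by linarith)]

lemma clmp_of_le (δ x : ℝ) (hδ : 0 ≤ δ) (hx : x ≤ -δ) : clmp δ x = -δ := by
  unfold clmp; rw [min_eq_right (by linarith), max_eq_left (by linarith)]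

lemma clmp_of_mem (δ x : ℝ) (hx1 : -δ ≤ x) (hx2 : x ≤ δ) : clmp δ x = x := by
  unfold clmp; rw [min_eq_right hx2, max_eq_right hx1]

lemma hub_val (δ z : ℝ) : Hub δ z = z * clmp δ z - (clmp δ z)^2/2 := rfl

lemma subgrad (δ : ℝ) (hδ : 0 ≤ δ) (x y : ℝ) :
    Hub δ x + clmp δ x * (y - x) ≤ Hub δ y := by
  obtain ⟨ha1, ha2⟩ := clmp_mem δ x hδ
  rw [hub_val, hub_val]
  rcases le_total δ y with hy | hy
  · rw [clmp_of_ge δ y hδ hy]; nlinarith [sq_nonneg (clmp δ x - δ)]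
  · rcases le_total y (-δ) with hy2 | hy2
    · rw [clmp_of_le δ y hδ hy2]; nlinarith [sq_nonneg (clmp δ x + δ)]
    · rw [clmp_of_mem δ y hy2 hy]; nlinarith [sq_nonneg (clmp δ x - y)]

lemma upperb (δ : ℝ) (hδ : 0 ≤ δ) (x y : ℝ) :
    Hub δ y - Hub δ x - clmp δ x * (y - x) ≤ (y - x)^2/2 := by
  rw [hub_val, hub_val]
  rcases le_total δ x with h1 | h1
  · rw [clmp_of_ge δ x hδ h1]
    rcases le_total δ y with h3 | h3
    · rw [clmp_of_ge δ y hδ h3]; nlinarith [sq_nonneg (x - y)]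
    · rcases le_total y (-δ) with h4 | h4
      · rw [clmp_of_le δ y hδ h4]; nlinarith [sq_nonneg (x + y), sq_nonneg (x - δ), sq_nonneg (y + δ)]
      · rw [clmp_of_mem δ y h4 h3]; nlinarith [sq_nonneg (y - δ), sq_nonneg (x - δ)]
  · rcases le_total x (-δ) with h2 | h2
    · rw [clmp_of_le δ x hδ h2]
      rcases le_total δ y with h3 | h3
      · rw [clmp_of_ge δ y hδ h3]; nlinarith [sq_nonneg (x + y), sq_nonneg (x + δ), sq_nonneg (y - δ)]
      · rcases le_total y (-δ) with h4 | h4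
        · rw [clmp_of_le δ y hδ h4]; nlinarith [sq_nonneg (x - y)]
        · rw [clmp_of_mem δ y h4 h3]; nlinarith [sq_nonneg (y + δ), sq_nonneg (x + δ)]
    · rw [clmp_of_mem δ x h2 h1]
      rcases le_total δ y with h3 | h3
      · rw [clmp_of_ge δ y hδ h3]; nlinarith [sq_nonneg (y - δ)]
      · rcases le_total y (-δ) with h4 | h4
        · rw [clmp_of_le δ y hδ h4]; nlinarith [sq_nonneg (y + δ)]
        · rw [clmp_of_mem δ y h4 h3]; nlinarith [sq_nonneg (x - y)]

lemma clmp_lip (δ : ℝ) (hδ : 0 ≤ δ) (x y : ℝ) : |clmp δ x - clmp δ y| ≤ |x - y| := by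
  rcases le_total δ x with h1 | h1
  · rw [clmp_of_ge δ x hδ h1]
    rcases le_total δ y with h3 | h3
    · rw [clmp_of_ge δ y hδ h3]; simp [abs_nonneg]
    · rcases le_total y (-δ) with h4 | h4
      · rw [clmp_of_le δ y hδ h4]; rw [abs_le]; constructor <;> cases abs_cases (x - y) <;> linarith [(abs_nonneg (x-y))]
      · rw [clmp_of_mem δ y h4 h3]; rw [abs_le]; constructor <;> cases abs_cases (x - y) <;> linarith [(abs_nonneg (x-y))]
  · rcases le_total x (-δ) with h2 | h2
    · rw [clmp_of_le δ x hδ h2]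
      rcases le_total δ y with h3 | h3
      · rw [clmp_of_ge δ y hδ h3]; rw [abs_le]; constructor <;> cases abs_cases (x - y) <;> linarith [(abs_nonneg (x-y))]
      · rcases le_total y (-δ) with h4 | h4
        · rw [clmp_of_le δ y hδ h4]; simp [abs_nonneg]
        · rw [clmp_of_mem δ y h4 h3]; rw [abs_le]; constructor <;> cases abs_cases (x - y) <;> linarith [(abs_nonneg (x-y))]
    · rw [clmp_of_mem δ x h2 h1]
      rcases le_total δ y with h3 | h3
      · rw [clmp_of_ge δ y hδ h3]; rw [abs_le]; constructor <;> cases abs_cases (x - y) <;> linarith [(abs_nonneg (x-y))]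
      · rcases le_total y (-δ) with h4 | h4
        · rw [clmp_of_le δ y hδ h4]; rw [abs_le]; constructor <;> cases abs_cases (x - y) <;> linarith [(abs_nonneg (x-y))]
        · rw [clmp_of_mem δ y h4 h3]

lemma hub_deriv (δ : ℝ) (hδ : 0 ≤ δ) (x : ℝ) : HasDerivAt (Hub δ) (clmp δ x) x := by
  rw [hasDerivAt_iff_isLittleO]
  have h1 : (fun y => Hub δ y - Hub δ x - (y - x) • clmp δ x) =O[nhds x]
      (fun y => (y - x)^2) := by
    apply Asymptotics.IsBigO.of_bound 1
    filter_upwards with y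
    have h2 := subgrad δ hδ x y
    have h3 := upperb δ hδ x y
    simp only [smul_eq_mul, Real.norm_eq_abs, one_mul]
    rw [abs_of_nonneg (sq_nonneg (y - x)), abs_le]
    constructor <;> nlinarith [sq_nonneg (y - x)]
  refine h1.trans_isLittleO ?_
  have hb : (fun y : ℝ => y - x) =o[nhds x] (fun _ => (1:ℝ)) := by
    rw [Asymptotics.isLittleO_one_iff]
    simpa using (continuous_id.tendsto x).sub (tendsto_const_nhds (x := x))
  simpa [sq] using hb.mul_isBigO (Asymptotics.isBigO_refl (fun y : ℝ => y - x) (nhds x))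

lemma hub_convex (δ : ℝ) (hδ : 0 ≤ δ) : ConvexOn ℝ Set.univ (Hub δ) := by
  refine ⟨convex_univ, ?_⟩
  intro x _ y _ a b ha hb hab
  have hb' : b = 1 - a := by linarith
  subst hb'
  have h1 := subgrad δ hδ (a*x + (1-a)*y) x
  have h2 := subgrad δ hδ (a*x + (1-a)*y) y
  simp only [smul_eq_mul]
  linarith [add_le_add (mul_le_mul_of_nonneg_left h1 ha) (mul_le_mul_of_nonneg_left h2 hb)]

theorem stmt_10 (N : ℕ) (hN : 0 < N) (αt : ℝ) (α r : ℝ) (hα : 1 ≤ α)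
    (hbal : 1 / (2 * (2 * N * α + 1)) = (1 - α) ^ (2 * N) / 2)
    (hr : r = 1 / (2 * (2 * N * α + 1))) :
    ∃ f f' : ℝ → ℝ, ∃ xstar : ℝ,
      ConvexOn ℝ Set.univ f ∧
      (∀ x, HasDerivAt f (f' x) x) ∧
      (∀ x y, |f' x - f' y| ≤ |x - y|) ∧
      IsMinOn f Set.univ xstar ∧
      |(1 : ℝ) - xstar| ≤ 1 ∧
      ∀ x : ℕ → ℝ, x 0 = 1 → (∀ k, x (k + 1) = x k - αt * f' (x k)) →
        f (x N) - f xstar ≥ r := by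
  have hN1 : (1:ℝ) ≤ (N:ℝ) := by exact_mod_cast hN
  have hDα : (0:ℝ) < 2 * N * α + 1 := by nlinarith
  -- the quadratic construction, good whenever r ≤ (1-αt)^(2N)/2
  have quad : r ≤ (1 - αt)^(2*N)/2 →
      (∃ f f' : ℝ → ℝ, ∃ xstar : ℝ,
      ConvexOn ℝ Set.univ f ∧
      (∀ x, HasDerivAt f (f' x) x) ∧
      (∀ x y, |f' x - f' y| ≤ |x - y|) ∧
      IsMinOn f Set.univ xstar ∧
      |(1 : ℝ) - xstar| ≤ 1 ∧
      ∀ x : ℕ → ℝ, x 0 = 1 → (∀ k, x (k + 1) = x k - αt * f' (x k)) →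
        f (x N) - f xstar ≥ r) := by
    intro hlow
    refine ⟨fun x => x^2/2, fun x => x, 0, ?_, ?_, ?_, ?_, by norm_num, ?_⟩
    · have h := (Even.convexOn_pow (even_two : Even 2)).smul
        (by norm_num : (0:ℝ) ≤ 1/2)
      have he : (fun x : ℝ => x^2/2) = (1/2 : ℝ) • (fun x : ℝ => x^2) := by
        funext z; simp [smul_eq_mul]; ring
      rw [he]; exact h
    · intro x
      have := (hasDerivAt_pow 2 x).div_const 2
      simpa using this
    · intro x y; exact le_refl _
    · exact isMinOn_iff.mpr (fun y _ => by simp; positivity)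
    · intro x h0 hrec
      have hx : ∀ k, x k = (1 - αt)^k := by
        intro k; induction k with
        | zero => simpa using h0
        | succ k ih => rw [hrec k, ih]; ring
      rw [hx N]
      have hpm : ((1 - αt)^N)^2 = (1 - αt)^(2*N) := by
        rw [← pow_mul, mul_comm]
      norm_num
      rw [hpm]
      linarith
  rcases le_total αt α with hle | hgt
  · rcases le_or_gt αt 0 with hneg | hpos
    · -- quadratic, αt ≤ 0
      apply quad
      have h1 : (1:ℝ) ≤ (1 - αt)^(2*N) := by
        calc (1:ℝ) = 1^(2*N) := (one_pow _).symm
        _ ≤ (1 - αt)^(2*N) := pow_le_pow_left₀ zero_le_one (by linarith) _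
      have h2 : r ≤ 1/2 := by
        rw [hr, div_le_div_iff₀ (by linarith) two_pos]
        nlinarith
      linarith
    · -- Huber case, 0 < αt ≤ α
      have hNαt : (0:ℝ) ≤ (N:ℝ) * αt := mul_nonneg (Nat.cast_nonneg N) hpos.le
      set D : ℝ := 2 * N * αt + 1 with hD
      have hD1 : (1:ℝ) ≤ D := by nlinarith
      have hDpos : (0:ℝ) < D := by linarith
      set δ : ℝ := 1 / D with hδdef
      have hδp : 0 < δ := by positivity
      have hδD : δ * D = 1 := by rw [hδdef]; field_simp
      have hδ1 : δ ≤ 1 := by rw [hδdef]; rw [div_le_one hDpos]; linarith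
      have hclmp0 : clmp δ 0 = 0 := clmp_of_mem δ 0 (by linarith) (by linarith)
      have hHub0 : Hub δ 0 = 0 := by rw [hub_val, hclmp0]; ring
      have hbound : ∀ k : ℕ, (k:ℝ) ≤ (N:ℝ) → δ ≤ 1 - (k:ℝ) * αt * δ := by
        intro k hkN
        have h1 : (k:ℝ) * αt * δ ≤ (N:ℝ) * αt * δ := by
          apply mul_le_mul_of_nonneg_right _ hδp.le
          exact mul_le_mul_of_nonneg_right hkN hpos.le
        nlinarith
      refine ⟨Hub δ, clmp δ, 0, hub_convex δ hδp.le, hub_deriv δ hδp.le,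
        clmp_lip δ hδp.le, ?_, by norm_num, ?_⟩
      · refine isMinOn_iff.mpr (fun y _ => ?_)
        have h := subgrad δ hδp.le 0 y
        rw [hHub0, hclmp0] at h
        rw [hHub0]; linarith
      · intro x h0 hrec
        have key : ∀ k, k ≤ N → x k = 1 - (k:ℝ) * αt * δ := by
          intro k; induction k with
          | zero => intro _; simp [h0]
          | succ k ih =>
            intro hk
            have hk' : k ≤ N := Nat.le_of_succ_le hk
            have hxk := ih hk'
            have hge : δ ≤ x k := by
              rw [hxk]; exact hbound k (Nat.cast_le.mpr hk')
            rw [hrec k, clmp_of_ge δ (x k) hδp.le hge, hxk]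
            push_cast; ring
        have hxN := key N le_rfl
        have hgeN : δ ≤ x N := by rw [hxN]; exact hbound N le_rfl
        rw [hub_val, clmp_of_ge δ (x N) hδp.le hgeN, hxN, hHub0]
        have hval : (1 - (N:ℝ) * αt * δ) * δ - δ^2/2 = 1/(2*D) := by
          rw [hδdef]; field_simp; ring
        rw [hval]
        have h2 : 2*D ≤ 2*(2*N*α+1) := by nlinarith
        have := one_div_le_one_div_of_le (by linarith) h2
        rw [hr]; linarith [hHub0]
  · -- quadratic, αt > α
    apply quad
    rw [hr, hbal]
    have h1 : (1 - α)^(2*N) = (α - 1)^(2*N) := by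
      rw [show (1:ℝ) - α = -(α - 1) from by ring, Even.neg_pow (even_two_mul N)]
    have h2 : (1 - αt)^(2*N) = (αt - 1)^(2*N) := by
      rw [show (1:ℝ) - αt = -(αt - 1) from by ring, Even.neg_pow (even_two_mul N)]
    rw [h1, h2]
    have := pow_le_pow_left₀ (by linarith : (0:ℝ) ≤ α - 1) (by linarith : α - 1 ≤ αt - 1) (2*N)
    linarith
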